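/- Let k be a complete nonarchimedean field with nontrivial dense valuation and let ‖·‖ denote the Gauss norm on the Tate algebra k{t₁,…,tₙ}. If A is a quotient of the Tate algebra by a closed ideal, equipped with the residue (quotient) seminorm, then for every element f of the quotient the infimum defining the residue seminorm is attained; in particular, the residue seminorm takes values in the value group |k| of k. -/

import Mathlib

open Filter

/-- The Gauss norm of a multivariate power series: the supremum of the absolute values of
its coefficients (finite on elements of the Tate algebra). -/
noncomputable def gaussNorm (k : Type*) [NontriviallyNormedField k] (n : ℕ)
    (f : MvPowerSeries (Fin n) k) : ℝ :=
  sSup (Set.range fun d : Fin n →₀ ℕ => ‖MvPowerSeries.coeff d f‖)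

/-- The Tate algebra `k{t₁,…,tₙ}`: power series whose coefficients tend to `0`. -/
def tateAlgebra (k : Type*) [NontriviallyNormedField k] (n : ℕ) :
    Set (MvPowerSeries (Fin n) k) :=
  {f | Tendsto (fun d : Fin n →₀ ℕ => ‖MvPowerSeries.coeff d f‖) cofinite (nhds 0)}

namespace StrictClosed

variable {k : Type*} [NontriviallyNormedField k] {n : ℕ}

local notation "E" => Fin n →₀ ℕ
local notation "T" => MvPowerSeries (Fin n) k

section Ultra
variable [IsUltrametricDist k]

theorem norm_add_le_max' (a b : k) : ‖a + b‖ ≤ max ‖a‖ ‖b‖ :=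
  IsUltrametricDist.norm_add_le_max a b

theorem norm_sub_le_max' (a b : k) : ‖a - b‖ ≤ max ‖a‖ ‖b‖ := by
  rw [sub_eq_add_neg]
  simpa using norm_add_le_max' a (-b)

/-- if `‖a - b‖ < ‖a‖` then `‖b‖ = ‖a‖`. -/
theorem norm_eq_of_sub_lt {a b : k} (h : ‖a - b‖ < ‖a‖) : ‖b‖ = ‖a‖ := by
  have hb : ‖b‖ ≤ max ‖a‖ ‖a - b‖ := by
    have := norm_sub_le_max' a (a - b)
    simpa using this
  have hab : ‖a‖ ≤ max ‖b‖ ‖a - b‖ := by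
    have := norm_add_le_max' b (a - b)
    have e : b + (a - b) = a := by ring
    rwa [e] at this
  rcases le_or_gt ‖a‖ ‖b‖ with h1 | h1
  · exact le_antisymm (hb.trans (max_le le_rfl h.le)) h1
  · exfalso
    rcases max_cases ‖b‖ ‖a - b‖ with ⟨he, _⟩ | ⟨he, _⟩ <;> rw [he] at hab
    · exact absurd hab (not_le.mpr h1)
    · exact absurd hab (not_le.mpr h)

end Ultra

/-- finiteness of the set of coefficients with norm at least ε -/
theorem hot_finite {f : T} (hf : f ∈ tateAlgebra k n) {ε : ℝ} (hε : 0 < ε) :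
    {d : E | ε ≤ ‖MvPowerSeries.coeff d f‖}.Finite := by
  have h := hf (Metric.ball_mem_nhds (0:ℝ) hε)
  rw [Filter.mem_map, Filter.mem_cofinite] at h
  refine h.subset fun d hd => ?_
  simp only [Set.mem_compl_iff, Set.mem_preimage, Metric.mem_ball, Real.dist_eq, sub_zero] at *
  rw [abs_of_nonneg (norm_nonneg _)]
  exact not_lt.mpr hd

/-- conversely -/
theorem tate_of_hot_finite {f : T}
    (h : ∀ ε : ℝ, 0 < ε → {d : E | ε ≤ ‖MvPowerSeries.coeff d f‖}.Finite) :
    f ∈ tateAlgebra k n := by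
  rw [tateAlgebra, Set.mem_setOf_eq, Metric.tendsto_nhds]
  intro ε hε
  rw [Filter.eventually_cofinite]
  refine (h ε hε).subset fun d hd => ?_
  simp only [Real.dist_eq, sub_zero, Set.mem_setOf_eq, not_lt] at hd ⊢
  rwa [abs_of_nonneg (norm_nonneg _)] at hd

theorem bddAbove_range {f : T} (hf : f ∈ tateAlgebra k n) :
    BddAbove (Set.range fun d : E => ‖MvPowerSeries.coeff d f‖) := by
  classical
  set F := (hot_finite hf one_pos).toFinset with hF
  set B := insert (1:ℝ) (F.image fun d => ‖MvPowerSeries.coeff d f‖) with hB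
  have hBne : B.Nonempty := ⟨1, Finset.mem_insert_self _ _⟩
  refine ⟨B.max' hBne, ?_⟩
  rintro x ⟨d, rfl⟩
  rcases le_or_gt 1 ‖MvPowerSeries.coeff d f‖ with h | h
  · have hd : d ∈ F := by rw [hF, Set.Finite.mem_toFinset]; exact h
    exact Finset.le_max' B _ (Finset.mem_insert_of_mem (Finset.mem_image_of_mem _ hd))
  · exact h.le.trans (Finset.le_max' B _ (Finset.mem_insert_self _ _))

theorem coeff_le_gaussNorm {f : T} (hf : f ∈ tateAlgebra k n) (d : E) :
    ‖MvPowerSeries.coeff d f‖ ≤ gaussNorm k n f :=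
  le_csSup (bddAbove_range hf) ⟨d, rfl⟩

theorem gaussNorm_nonneg {f : T} (hf : f ∈ tateAlgebra k n) : 0 ≤ gaussNorm k n f :=
  (norm_nonneg _).trans (coeff_le_gaussNorm hf 0)

theorem gaussNorm_le {f : T} {b : ℝ} (h : ∀ d : E, ‖MvPowerSeries.coeff d f‖ ≤ b) :
    gaussNorm k n f ≤ b :=
  csSup_le (Set.range_nonempty _) (by rintro x ⟨d, rfl⟩; exact h d)

theorem gaussNorm_zero : gaussNorm k n 0 = 0 := by
  have h : (Set.range fun d : E => ‖MvPowerSeries.coeff d (0:T)‖) = {0} := by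
    simp [Set.range_const]
  rw [gaussNorm, h, csSup_singleton]

theorem exists_coeff_ne_zero {f : T} (hf : f ≠ 0) : ∃ d : E, MvPowerSeries.coeff d f ≠ 0 := by
  by_contra h
  push_neg at h
  exact hf (MvPowerSeries.ext fun d => by rw [h d, map_zero])

/-- the Gauss norm of a nonzero Tate element is attained -/
theorem gaussNorm_attained {f : T} (hf : f ∈ tateAlgebra k n) (h0 : f ≠ 0) :
    ∃ d : E, ‖MvPowerSeries.coeff d f‖ = gaussNorm k n f := by
  obtain ⟨d₀, hd₀⟩ := exists_coeff_ne_zero h0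
  have hε : (0:ℝ) < ‖MvPowerSeries.coeff d₀ f‖ := norm_pos_iff.mpr hd₀
  set F := {d : E | ‖MvPowerSeries.coeff d₀ f‖ ≤ ‖MvPowerSeries.coeff d f‖} with hFdef
  have hFfin : F.Finite := hot_finite hf hε
  have hFne : F.Nonempty := ⟨d₀, by simp [hFdef]⟩
  obtain ⟨a, ha, hmax⟩ :=
    Set.Finite.exists_maximalFor (fun d => ‖MvPowerSeries.coeff d f‖) F hFfin hFne
  refine ⟨a, le_antisymm (coeff_le_gaussNorm hf a) (gaussNorm_le fun d => ?_)⟩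
  rcases le_or_gt ‖MvPowerSeries.coeff d₀ f‖ ‖MvPowerSeries.coeff d f‖ with h | h
  · rcases le_or_gt ‖MvPowerSeries.coeff d f‖ ‖MvPowerSeries.coeff a f‖ with h' | h'
    · exact h'
    · exact (hmax h h'.le)
  · exact h.le.trans ha

theorem gaussNorm_pos {f : T} (hf : f ∈ tateAlgebra k n) (h0 : f ≠ 0) :
    0 < gaussNorm k n f := by
  obtain ⟨d₀, hd₀⟩ := exists_coeff_ne_zero h0
  exact lt_of_lt_of_le (norm_pos_iff.mpr hd₀) (coeff_le_gaussNorm hf d₀)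

theorem eq_zero_of_gaussNorm_eq_zero {f : T} (hf : f ∈ tateAlgebra k n)
    (h : gaussNorm k n f = 0) : f = 0 := by
  by_contra h0
  exact absurd h (ne_of_gt (gaussNorm_pos hf h0))

section Ultra
variable [IsUltrametricDist k]

theorem tate_add {f g : T} (hf : f ∈ tateAlgebra k n) (hg : g ∈ tateAlgebra k n) :
    f + g ∈ tateAlgebra k n := by
  refine tate_of_hot_finite fun ε hε => ?_
  refine ((hot_finite hf hε).union (hot_finite hg hε)).subset fun d hd => ?_
  simp only [Set.mem_setOf_eq, map_add, Set.mem_union] at hd ⊢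
  by_contra h
  push_neg at h
  exact absurd hd (not_le.mpr (lt_of_le_of_lt (norm_add_le_max' _ _) (max_lt h.1 h.2)))

theorem gaussNorm_add_le {f g : T} (hf : f ∈ tateAlgebra k n) (hg : g ∈ tateAlgebra k n) :
    gaussNorm k n (f + g) ≤ max (gaussNorm k n f) (gaussNorm k n g) :=
  gaussNorm_le fun d => by
    rw [map_add]
    exact (norm_add_le_max' _ _).trans
      (max_le_max (coeff_le_gaussNorm hf d) (coeff_le_gaussNorm hg d))

end Ultra

theorem tate_neg {f : T} (hf : f ∈ tateAlgebra k n) : -f ∈ tateAlgebra k n := by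
  refine tate_of_hot_finite fun ε hε => ?_
  refine (hot_finite hf hε).subset fun d hd => ?_
  simpa only [Set.mem_setOf_eq, map_neg, norm_neg] using hd

theorem gaussNorm_neg (f : T) : gaussNorm k n (-f) = gaussNorm k n f := by
  unfold gaussNorm
  congr 1
  ext x
  constructor <;> rintro ⟨d, rfl⟩ <;> exact ⟨d, by simp⟩

section Ultra2
variable [IsUltrametricDist k]

theorem tate_sub {f g : T} (hf : f ∈ tateAlgebra k n) (hg : g ∈ tateAlgebra k n) :
    f - g ∈ tateAlgebra k n := by
  rw [sub_eq_add_neg]; exact tate_add hf (tate_neg hg)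

theorem gaussNorm_sub_le {f g : T} (hf : f ∈ tateAlgebra k n) (hg : g ∈ tateAlgebra k n) :
    gaussNorm k n (f - g) ≤ max (gaussNorm k n f) (gaussNorm k n g) := by
  rw [sub_eq_add_neg]
  refine (gaussNorm_add_le hf (tate_neg hg)).trans ?_
  rw [gaussNorm_neg]

end Ultra2

theorem tate_monomial (β : E) (c : k) :
    (MvPowerSeries.monomial β c : T) ∈ tateAlgebra k n := by
  refine tate_of_hot_finite fun ε hε => ?_
  refine (Set.finite_singleton β).subset fun d hd => ?_
  simp only [Set.mem_setOf_eq, MvPowerSeries.coeff_monomial] at hd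
  by_contra h
  have hne : d ≠ β := by simpa using h
  rw [if_neg hne] at hd
  simp at hd
  exact absurd hd (not_le.mpr hε)

theorem coeff_monomial_mul' (β : E) (c : k) (h : T) (d : E) :
    MvPowerSeries.coeff d (MvPowerSeries.monomial β c * h) =
      if β ≤ d then c * MvPowerSeries.coeff (d - β) h else 0 :=
  MvPowerSeries.coeff_monomial_mul d β h c

theorem tate_monomial_mul {h : T} (hh : h ∈ tateAlgebra k n) (β : E) (c : k) :
    (MvPowerSeries.monomial β c * h : T) ∈ tateAlgebra k n := by
  rcases eq_or_ne c 0 with rfl | hc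
  · have : (MvPowerSeries.monomial β (0:k) : T) = 0 := by
      apply MvPowerSeries.ext; intro d; simp [MvPowerSeries.coeff_monomial]
    rw [this, MvPowerSeries.zero_mul]
    exact tate_of_hot_finite fun ε hε => (Set.finite_empty.subset fun d hd => by
      simp only [Set.mem_setOf_eq, map_zero, norm_zero] at hd
      exact absurd hd (not_le.mpr hε))
  refine tate_of_hot_finite fun ε hε => ?_
  have hε' : (0:ℝ) < ε / ‖c‖ := div_pos hε (norm_pos_iff.mpr hc)
  refine (((hot_finite hh hε').image (fun e => β + e))).subset fun d hd => ?_
  simp only [Set.mem_setOf_eq] at hd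
  rw [coeff_monomial_mul'] at hd
  by_cases hβ : β ≤ d
  · rw [if_pos hβ] at hd
    refine ⟨d - β, ?_, show β + (d - β) = d by rw [add_comm, tsub_add_cancel_of_le hβ]⟩
    show ε / ‖c‖ ≤ ‖MvPowerSeries.coeff (d - β) h‖
    rw [norm_mul] at hd
    rw [div_le_iff₀ (norm_pos_iff.mpr hc), mul_comm]
    exact hd
  · rw [if_neg hβ] at hd
    simp at hd
    exact absurd hd (not_le.mpr hε)

theorem gaussNorm_monomial_mul_le {h : T} (hh : h ∈ tateAlgebra k n) (β : E) (c : k) :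
    gaussNorm k n (MvPowerSeries.monomial β c * h) ≤ ‖c‖ * gaussNorm k n h := by
  refine gaussNorm_le fun d => ?_
  rw [coeff_monomial_mul']
  by_cases hβ : β ≤ d
  · rw [if_pos hβ, norm_mul]
    exact mul_le_mul_of_nonneg_left (coeff_le_gaussNorm hh _) (norm_nonneg c)
  · rw [if_neg hβ, norm_zero]
    exact mul_nonneg (norm_nonneg c) (gaussNorm_nonneg hh)

theorem gaussNorm_scale {h : T} (hh : h ∈ tateAlgebra k n) (c : k) :
    gaussNorm k n (MvPowerSeries.monomial 0 c * h) = ‖c‖ * gaussNorm k n h := by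
  rcases eq_or_ne c 0 with rfl | hc
  · have : (MvPowerSeries.monomial (0:E) (0:k) : T) = 0 := by
      apply MvPowerSeries.ext; intro d; simp [MvPowerSeries.coeff_monomial]
    rw [this, MvPowerSeries.zero_mul, gaussNorm_zero, norm_zero, zero_mul]
  refine le_antisymm (gaussNorm_monomial_mul_le hh 0 c) ?_
  have key : gaussNorm k n h ≤ ‖c‖⁻¹ * gaussNorm k n (MvPowerSeries.monomial 0 c * h) := by
    have he : (MvPowerSeries.monomial (0:E) c⁻¹ * (MvPowerSeries.monomial 0 c * h) : T)
        = h := by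
      apply MvPowerSeries.ext; intro d
      rw [coeff_monomial_mul', if_pos (zero_le : (0:E) ≤ d), coeff_monomial_mul', if_pos (zero_le : (0:E) ≤ _)]
      simp [inv_mul_cancel_left₀ hc]
    calc gaussNorm k n h
        = gaussNorm k n (MvPowerSeries.monomial 0 c⁻¹ * (MvPowerSeries.monomial 0 c * h)) :=
          by rw [he]
      _ ≤ ‖c⁻¹‖ * gaussNorm k n (MvPowerSeries.monomial 0 c * h) :=
          gaussNorm_monomial_mul_le (tate_monomial_mul hh 0 c) 0 c⁻¹
      _ = ‖c‖⁻¹ * gaussNorm k n (MvPowerSeries.monomial 0 c * h) := by rw [norm_inv]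
  calc ‖c‖ * gaussNorm k n h
      ≤ ‖c‖ * (‖c‖⁻¹ * gaussNorm k n (MvPowerSeries.monomial 0 c * h)) :=
        mul_le_mul_of_nonneg_left key (norm_nonneg c)
    _ = gaussNorm k n (MvPowerSeries.monomial 0 c * h) := by
        rw [← mul_assoc, mul_inv_cancel₀ (norm_ne_zero_iff.mpr hc), one_mul]

theorem coeff_scale (c : k) (h : T) (d : E) :
    MvPowerSeries.coeff d (MvPowerSeries.monomial 0 c * h) =
      c * MvPowerSeries.coeff d h := by
  rw [coeff_monomial_mul', if_pos (zero_le : (0:E) ≤ d), tsub_zero]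

theorem gaussNorm_shift {h : T} (hh : h ∈ tateAlgebra k n) (β : E) :
    gaussNorm k n (MvPowerSeries.monomial β 1 * h) = gaussNorm k n h := by
  refine le_antisymm (by simpa using gaussNorm_monomial_mul_le hh β 1) ?_
  refine gaussNorm_le fun d => ?_
  have : MvPowerSeries.coeff (β + d) (MvPowerSeries.monomial β 1 * h) =
      MvPowerSeries.coeff d h := by
    rw [coeff_monomial_mul', if_pos le_self_add, one_mul, add_tsub_cancel_left]
  rw [← this]
  exact coeff_le_gaussNorm (tate_monomial_mul hh β 1) (β + d)

/-! ### Lex order facts -/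

theorem lex_add_lt_add_iff {c a b : E} : toLex (c + a) < toLex (c + b) ↔ toLex a < toLex b := by
  constructor <;> intro h
  · obtain ⟨j, h1, h2⟩ := Finsupp.lex_def.mp h
    refine Finsupp.lex_def.mpr ⟨j, fun d hd => ?_, ?_⟩
    · have h3 : (c + a) d = (c + b) d := h1 d hd
      simpa using h3
    · have h4 : (c + a) j < (c + b) j := h2
      simpa using h4
  · obtain ⟨j, h1, h2⟩ := Finsupp.lex_def.mp h
    refine Finsupp.lex_def.mpr ⟨j, fun d hd => ?_, ?_⟩
    · have h3 : a d = b d := h1 d hd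
      simp [Finsupp.add_apply, h3]
    · have h4 : a j < b j := h2
      simpa using h4

theorem lex_add_le_add_iff {c a b : E} : toLex (c + a) ≤ toLex (c + b) ↔ toLex a ≤ toLex b := by
  rw [← not_lt, ← not_lt, not_iff_not, lex_add_lt_add_iff]

/-- `IsLE f γ` : γ is the lex-largest exponent among the coefficients of maximal norm. -/
def IsLE (f : T) (γ : E) : Prop :=
  ‖MvPowerSeries.coeff γ f‖ = gaussNorm k n f ∧
    ∀ δ : E, ‖MvPowerSeries.coeff δ f‖ = gaussNorm k n f → toLex δ ≤ toLex γ

theorem isLE_exists {f : T} (hf : f ∈ tateAlgebra k n) (h0 : f ≠ 0) : ∃ γ : E, IsLE f γ := by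
  classical
  set F := {d : E | ‖MvPowerSeries.coeff d f‖ = gaussNorm k n f} with hFdef
  have hFfin : F.Finite := by
    refine (hot_finite hf (gaussNorm_pos hf h0)).subset fun d hd => ?_
    rw [Set.mem_setOf_eq] at hd ⊢
    rw [hd]
  have hFne : F.Nonempty := gaussNorm_attained hf h0
  obtain ⟨a, ha, hmax⟩ := Set.Finite.exists_maximalFor (fun d => toLex d) F hFfin hFne
  refine ⟨a, ha, fun δ hδ => ?_⟩
  rcases le_or_gt (toLex δ) (toLex a) with h | h
  · exact h
  · exact (hmax hδ h.le)

/-! ### Dickson's lemma -/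

theorem dickson (S : Set E) :
    ∃ A : Finset E, ↑A ⊆ S ∧ ∀ γ ∈ S, ∃ α ∈ A, α ≤ γ := by
  classical
  set mono : E → MvPolynomial (Fin n) ℚ := fun α => MvPolynomial.monomial α (1:ℚ) with hmono
  set J : Ideal (MvPolynomial (Fin n) ℚ) := Ideal.span (mono '' S) with hJ
  obtain ⟨Fgen, hFgen⟩ := (IsNoetherian.noetherian J)
  -- each generator lies in the span of finitely many monomials from S
  have hmem : ∀ p ∈ Fgen, ∃ Tp : Finset (MvPolynomial (Fin n) ℚ),
      ↑Tp ⊆ mono '' S ∧ p ∈ Submodule.span (MvPolynomial (Fin n) ℚ) (Tp : Set _) := by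
    intro p hp
    have hpJ : p ∈ J := by
      rw [← hFgen]
      exact Submodule.subset_span hp
    exact Submodule.mem_span_finite_of_mem_span hpJ
  choose Tp hTp1 hTp2 using hmem
  set Tall : Finset (MvPolynomial (Fin n) ℚ) := Fgen.attach.biUnion (fun p => Tp p.1 p.2)
    with hTall
  have hTsub : ↑Tall ⊆ mono '' S := by
    intro x hx
    rw [hTall] at hx
    simp only [Finset.coe_biUnion, Set.mem_iUnion, Finset.mem_coe] at hx
    obtain ⟨p, hp, hx⟩ := hx
    exact hTp1 p.1 p.2 hx
  -- extract the exponents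
  have hchoice : ∀ x ∈ Tall, ∃ α ∈ S, mono α = x := by
    intro x hx
    obtain ⟨α, hα, hαx⟩ := hTsub hx
    exact ⟨α, hα, hαx⟩
  set A : Finset E := Tall.attach.image (fun x => Classical.choose (hchoice x.1 x.2)) with hA
  have hAS : ↑A ⊆ S := by
    intro α hα
    rw [hA] at hα
    simp only [Finset.coe_image, Set.mem_image, Finset.mem_coe, Finset.mem_attach] at hα
    obtain ⟨x, -, rfl⟩ := hα
    exact (Classical.choose_spec (hchoice x.1 x.2)).1
  have hTA : ↑Tall ⊆ mono '' (A : Set E) := by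
    intro x hx
    refine ⟨Classical.choose (hchoice x hx), ?_, (Classical.choose_spec (hchoice x hx)).2⟩
    rw [hA]
    simp only [Finset.coe_image, Set.mem_image, Finset.mem_coe, Finset.mem_attach]
    exact ⟨⟨x, hx⟩, trivial, rfl⟩
  -- J is contained in the span of the monomials with exponents in A
  have hJle : J ≤ Ideal.span (mono '' (A : Set E)) := by
    rw [← hFgen, Submodule.span_le]
    intro p hp
    have h1 : p ∈ Submodule.span (MvPolynomial (Fin n) ℚ) (Tall : Set _) := by
      refine Submodule.span_mono ?_ (hTp2 p hp)
      intro x hx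
      rw [hTall]
      simp only [Finset.coe_biUnion, Set.mem_iUnion, Finset.mem_coe]
      exact ⟨⟨p, hp⟩, Finset.mem_attach _ _, hx⟩
    have h2 : Submodule.span (MvPolynomial (Fin n) ℚ) (Tall : Set _) ≤
        Ideal.span (mono '' (A : Set E)) := Submodule.span_le.mpr (fun x hx => by
      exact Ideal.subset_span (hTA hx))
    exact h2 h1
  refine ⟨A, hAS, fun γ hγ => ?_⟩
  have hγJ : mono γ ∈ J := Ideal.subset_span ⟨γ, hγ, rfl⟩
  have hγA : mono γ ∈ Ideal.span (mono '' (A : Set E)) := hJle hγJ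
  rw [hmono] at hγA
  have := MvPolynomial.mem_ideal_span_monomial_image.mp hγA
  have hsup : γ ∈ (MvPolynomial.monomial γ (1:ℚ)).support := by
    rw [MvPolynomial.support_monomial, if_neg one_ne_zero]
    exact Finset.mem_singleton_self γ
  obtain ⟨α, hα1, hα2⟩ := this γ hsup
  exact ⟨α, hα1, hα2⟩

theorem tate_zero : (0 : T) ∈ tateAlgebra k n := by
  refine tate_of_hot_finite fun ε hε => ?_
  refine Set.finite_empty.subset fun d hd => ?_
  simp only [Set.mem_setOf_eq, map_zero, norm_zero] at hd
  exact absurd hd (not_le.mpr hε)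

section Pass

variable [IsUltrametricDist k]

/-- One reduction pass: kills all `G`-coefficients above the threshold `θ * s`. -/
theorem pass {I : Set (MvPowerSeries (Fin n) k)} {G : Set (Fin n →₀ ℕ)}
    {A : Finset (Fin n →₀ ℕ)} {H : (Fin n →₀ ℕ) → MvPowerSeries (Fin n) k} {θ : ℝ}
    (hI0 : (0 : MvPowerSeries (Fin n) k) ∈ I)
    (hIadd : ∀ g ∈ I, ∀ g' ∈ I, g + g' ∈ I)
    (hImul : ∀ f ∈ tateAlgebra k n, ∀ g ∈ I, f * g ∈ I)
    (hA : ∀ γ ∈ G, ∃ α ∈ A, α ≤ γ)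
    (hHI : ∀ α ∈ A, H α ∈ I)
    (hHT : ∀ α ∈ A, H α ∈ tateAlgebra k n)
    (hHlc : ∀ α ∈ A, MvPowerSeries.coeff α (H α) = 1)
    (hHle : ∀ α ∈ A, ∀ d : E, ‖MvPowerSeries.coeff d (H α)‖ ≤ 1)
    (hθ0 : 0 < θ) (hθ1 : θ < 1)
    (hHθ : ∀ α ∈ A, ∀ d : E, toLex α < toLex d → ‖MvPowerSeries.coeff d (H α)‖ ≤ θ)
    (s : ℝ) (hs : 0 < s) (σ : MvPowerSeries (Fin n) k) (hσT : σ ∈ tateAlgebra k n)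
    (hσ : ∀ γ ∈ G, ‖MvPowerSeries.coeff γ σ‖ ≤ s) :
    ∃ x : MvPowerSeries (Fin n) k, x ∈ I ∧ x ∈ tateAlgebra k n ∧ gaussNorm k n x ≤ s ∧
      ∀ γ ∈ G, ‖MvPowerSeries.coeff γ (σ - x)‖ ≤ θ * s := by
  classical
  have hθs : 0 < θ * s := mul_pos hθ0 hs
  -- the statement we prove by well-founded induction on the lex bound of the dirty set
  have key : ∀ l : Lex (Fin n →₀ ℕ), ∀ σ : MvPowerSeries (Fin n) k, σ ∈ tateAlgebra k n →
      (∀ γ ∈ G, ‖MvPowerSeries.coeff γ σ‖ ≤ s) →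
      (∀ γ ∈ G, θ * s < ‖MvPowerSeries.coeff γ σ‖ → toLex γ ≤ l) →
      ∃ x : MvPowerSeries (Fin n) k, x ∈ I ∧ x ∈ tateAlgebra k n ∧ gaussNorm k n x ≤ s ∧
        ∀ γ ∈ G, ‖MvPowerSeries.coeff γ (σ - x)‖ ≤ θ * s := by
    intro l
    induction l using WellFoundedLT.induction with
    | _ l IH =>
    intro σ hσT hinv hbound
    by_cases hD : ∀ γ ∈ G, ‖MvPowerSeries.coeff γ σ‖ ≤ θ * s
    · exact ⟨0, hI0, tate_zero, by rw [gaussNorm_zero]; exact hs.le,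
        fun γ hγ => by rw [sub_zero]; exact hD γ hγ⟩
    · push_neg at hD
      obtain ⟨γ₀, hγ₀G, hγ₀⟩ := hD
      -- the dirty set
      set Dr : Set E := {γ | γ ∈ G ∧ θ * s < ‖MvPowerSeries.coeff γ σ‖} with hDr
      have hDrFin : Dr.Finite := by
        refine (hot_finite hσT hθs).subset fun d hd => ?_
        exact hd.2.le
      have hDrNe : Dr.Nonempty := ⟨γ₀, hγ₀G, hγ₀⟩
      obtain ⟨γ, hγDr, hγmax'⟩ := Set.Finite.exists_maximalFor (fun d => toLex d) Dr hDrFin hDrNe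
      have hγmax : ∀ δ ∈ Dr, toLex δ ≤ toLex γ := by
        intro δ hδ
        rcases le_or_gt (toLex δ) (toLex γ) with h | h
        · exact h
        · exact (hγmax' hδ h.le)
      obtain ⟨hγG, hγdirty⟩ := hγDr
      obtain ⟨α, hαA, hαγ⟩ := hA γ hγG
      set c : k := MvPowerSeries.coeff γ σ with hc
      have hcs : ‖c‖ ≤ s := hinv γ hγG
      set β : E := γ - α with hβ
      have hβγ : β ≤ γ := by rw [hβ]; exact tsub_le_self
      have hγβα : γ - β = α := tsub_tsub_cancel_of_le hαγ
      have hγeq : β + α = γ := by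
        rw [hβ]; exact tsub_add_cancel_of_le hαγ
      set x₀ : T := MvPowerSeries.monomial β c * H α with hx₀def
      have hx₀I : x₀ ∈ I := hImul _ (tate_monomial β c) _ (hHI α hαA)
      have hx₀T : x₀ ∈ tateAlgebra k n := tate_monomial_mul (hHT α hαA) β c
      have hx₀le : ∀ d : E, ‖MvPowerSeries.coeff d x₀‖ ≤ ‖c‖ := by
        intro d
        rw [hx₀def, coeff_monomial_mul']
        by_cases hd : β ≤ d
        · rw [if_pos hd, norm_mul]
          calc ‖c‖ * ‖MvPowerSeries.coeff (d - β) (H α)‖ ≤ ‖c‖ * 1 :=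
              mul_le_mul_of_nonneg_left (hHle α hαA _) (norm_nonneg c)
            _ = ‖c‖ := mul_one _
        · rw [if_neg hd, norm_zero]; exact norm_nonneg c
      have hgx₀ : gaussNorm k n x₀ ≤ s := gaussNorm_le fun d => (hx₀le d).trans hcs
      have hx₀γ : MvPowerSeries.coeff γ x₀ = c := by
        rw [hx₀def, coeff_monomial_mul', if_pos hβγ, hγβα, hHlc α hαA, mul_one]
      set σ' : T := σ - x₀ with hσ'def
      have hσ'T : σ' ∈ tateAlgebra k n := tate_sub hσT hx₀T
      have hσ'inv : ∀ δ ∈ G, ‖MvPowerSeries.coeff δ σ'‖ ≤ s := by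
        intro δ hδ
        rw [hσ'def, map_sub]
        exact (norm_sub_le_max' _ _).trans (max_le (hinv δ hδ) ((hx₀le δ).trans hcs))
      have hσ'γ : MvPowerSeries.coeff γ σ' = 0 := by
        rw [hσ'def, map_sub, hx₀γ, ← hc, sub_self]
      have hσ'high : ∀ δ ∈ G, toLex γ < toLex δ → ‖MvPowerSeries.coeff δ σ'‖ ≤ θ * s := by
        intro δ hδG hδγ
        have hσδ : ‖MvPowerSeries.coeff δ σ‖ ≤ θ * s := by
          by_contra hcon
          push_neg at hcon
          exact absurd (hγmax δ ⟨hδG, hcon⟩) (not_le.mpr hδγ)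
        have hx₀δ : ‖MvPowerSeries.coeff δ x₀‖ ≤ θ * s := by
          rw [hx₀def, coeff_monomial_mul']
          by_cases hd : β ≤ δ
          · rw [if_pos hd, norm_mul]
            have hlex : toLex α < toLex (δ - β) := by
              have h1 : toLex (β + α) < toLex (β + (δ - β)) := by
                rw [hγeq]
                rw [add_comm β (δ - β), tsub_add_cancel_of_le hd]
                exact hδγ
              exact lex_add_lt_add_iff.mp h1
            calc ‖c‖ * ‖MvPowerSeries.coeff (δ - β) (H α)‖ ≤ s * θ :=
                mul_le_mul hcs (hHθ α hαA _ hlex) (norm_nonneg _) hs.le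
              _ = θ * s := mul_comm s θ
          · rw [if_neg hd, norm_zero]; exact hθs.le
        rw [hσ'def, map_sub]
        exact (norm_sub_le_max' _ _).trans (max_le hσδ hx₀δ)
      by_cases hD' : ∀ δ ∈ G, ‖MvPowerSeries.coeff δ σ'‖ ≤ θ * s
      · exact ⟨x₀, hx₀I, hx₀T, hgx₀, fun δ hδ => hD' δ hδ⟩
      · push_neg at hD'
        obtain ⟨δ₀, hδ₀G, hδ₀⟩ := hD'
        set Dr' : Set E := {δ | δ ∈ G ∧ θ * s < ‖MvPowerSeries.coeff δ σ'‖} with hDr'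
        have hDr'Fin : Dr'.Finite := (hot_finite hσ'T hθs).subset fun d hd => hd.2.le
        have hDr'Ne : Dr'.Nonempty := ⟨δ₀, hδ₀G, hδ₀⟩
        obtain ⟨γ', hγ'Dr, hγ'max'⟩ :=
          Set.Finite.exists_maximalFor (fun d => toLex d) Dr' hDr'Fin hDr'Ne
        have hγ'max : ∀ δ ∈ Dr', toLex δ ≤ toLex γ' := by
          intro δ hδ
          rcases le_or_gt (toLex δ) (toLex γ') with h | h
          · exact h
          · exact (hγ'max' hδ h.le)
        -- all dirty exponents of σ' are lex-smaller than γ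
        have hDr'lt : ∀ δ ∈ Dr', toLex δ < toLex γ := by
          rintro δ ⟨hδG, hδdirty⟩
          rcases lt_trichotomy (toLex δ) (toLex γ) with h | h | h
          · exact h
          · exfalso
            have : δ = γ := toLex.injective h
            rw [this, hσ'γ] at hδdirty
            simp at hδdirty
            exact absurd hδdirty (not_lt.mpr hθs.le)
          · exact absurd (hσ'high δ hδG h) (not_le.mpr hδdirty)
        have hγ'γ : toLex γ' < toLex γ := hDr'lt γ' hγ'Dr
        have hγl : toLex γ ≤ l := hbound γ hγG hγdirty
        obtain ⟨x', hx'I, hx'T, hgx', hx'conc⟩ :=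
          IH (toLex γ') (lt_of_lt_of_le hγ'γ hγl) σ' hσ'T hσ'inv
            (fun δ hδG hδd => hγ'max δ ⟨hδG, hδd⟩)
        refine ⟨x₀ + x', hIadd _ hx₀I _ hx'I, tate_add hx₀T hx'T, ?_, ?_⟩
        · exact (gaussNorm_add_le hx₀T hx'T).trans (max_le hgx₀ hgx')
        · intro δ hδ
          have : σ - (x₀ + x') = σ' - x' := by rw [hσ'def]; ring
          rw [this]
          exact hx'conc δ hδ
  -- now apply `key`
  by_cases hD : ∀ γ ∈ G, ‖MvPowerSeries.coeff γ σ‖ ≤ θ * s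
  · exact ⟨0, hI0, tate_zero, by rw [gaussNorm_zero]; exact hs.le,
      fun γ hγ => by rw [sub_zero]; exact hD γ hγ⟩
  · push_neg at hD
    obtain ⟨γ₀, hγ₀G, hγ₀⟩ := hD
    set Dr : Set E := {γ | γ ∈ G ∧ θ * s < ‖MvPowerSeries.coeff γ σ‖} with hDr
    have hDrFin : Dr.Finite := (hot_finite hσT hθs).subset fun d hd => hd.2.le
    have hDrNe : Dr.Nonempty := ⟨γ₀, hγ₀G, hγ₀⟩
    obtain ⟨γ, hγDr, hγmax'⟩ := Set.Finite.exists_maximalFor (fun d => toLex d) Dr hDrFin hDrNe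
    have hγmax : ∀ δ ∈ Dr, toLex δ ≤ toLex γ := by
      intro δ hδ
      rcases le_or_gt (toLex δ) (toLex γ) with h | h
      · exact h
      · exact (hγmax' hδ h.le)
    exact key (toLex γ) σ hσT hσ (fun δ hδG hδd => hγmax δ ⟨hδG, hδd⟩)

end Pass

section GClosure

variable [IsUltrametricDist k]

/-- upward closure of the set of leading exponents of an ideal -/
theorem G_upward {I : Set (MvPowerSeries (Fin n) k)}
    (hIsub : I ⊆ tateAlgebra k n)
    (hImul : ∀ f ∈ tateAlgebra k n, ∀ g ∈ I, f * g ∈ I)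
    {γ γ' : Fin n →₀ ℕ} (hγ : ∃ h, h ∈ I ∧ h ≠ 0 ∧ IsLE h γ) (hle : γ ≤ γ') :
    ∃ h, h ∈ I ∧ h ≠ 0 ∧ IsLE h γ' := by
  obtain ⟨h, hhI, hh0, hLE⟩ := hγ
  have hhT : h ∈ tateAlgebra k n := hIsub hhI
  set β : Fin n →₀ ℕ := γ' - γ with hβ
  have hβγ' : β + γ = γ' := by rw [hβ]; exact tsub_add_cancel_of_le hle
  set h' : MvPowerSeries (Fin n) k := MvPowerSeries.monomial β 1 * h with hh'
  have hh'T : h' ∈ tateAlgebra k n := tate_monomial_mul hhT β 1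
  have hh'I : h' ∈ I := hImul _ (tate_monomial β 1) h hhI
  have hgn : gaussNorm k n h' = gaussNorm k n h := gaussNorm_shift hhT β
  have hcoeff : ∀ d : Fin n →₀ ℕ, β ≤ d →
      MvPowerSeries.coeff d h' = MvPowerSeries.coeff (d - β) h := by
    intro d hd
    rw [hh', coeff_monomial_mul', if_pos hd, one_mul]
  have hcoeff0 : ∀ d : Fin n →₀ ℕ, ¬ β ≤ d → MvPowerSeries.coeff d h' = 0 := by
    intro d hd
    rw [hh', coeff_monomial_mul', if_neg hd]
  have hβγ'le : β ≤ γ' := by rw [← hβγ']; exact le_self_add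
  have hγ'β : γ' - β = γ := by rw [hβ]; exact tsub_tsub_cancel_of_le hle
  have hc' : MvPowerSeries.coeff γ' h' = MvPowerSeries.coeff γ h := by
    rw [hcoeff γ' hβγ'le, hγ'β]
  have hpos : 0 < gaussNorm k n h := gaussNorm_pos hhT hh0
  have hh'0 : h' ≠ 0 := by
    intro hcon
    have hz : MvPowerSeries.coeff γ h = 0 := by rw [← hc', hcon, map_zero]
    have h1 := hLE.1
    rw [hz, norm_zero] at h1
    exact absurd h1.symm (ne_of_gt hpos)
  refine ⟨h', hh'I, hh'0, ?_, ?_⟩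
  · rw [hc', hgn]; exact hLE.1
  · intro δ hδ
    by_cases hβδ : β ≤ δ
    · have h1 : ‖MvPowerSeries.coeff (δ - β) h‖ = gaussNorm k n h := by
        rw [← hcoeff δ hβδ, hδ, hgn]
      have h2 : toLex (δ - β) ≤ toLex γ := hLE.2 _ h1
      have h3 : toLex (β + (δ - β)) ≤ toLex (β + γ) := lex_add_le_add_iff.mpr h2
      rwa [show β + (δ - β) = δ by rw [add_comm]; exact tsub_add_cancel_of_le hβδ, hβγ'] at h3
    · exfalso
      rw [hcoeff0 δ hβδ, norm_zero] at hδ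
      rw [hgn] at hδ
      exact absurd hδ.symm (ne_of_gt hpos)

/-- normalized reducers with controlled second level -/
theorem reducer_exists {I : Set (MvPowerSeries (Fin n) k)}
    (hIsub : I ⊆ tateAlgebra k n)
    (hImul : ∀ f ∈ tateAlgebra k n, ∀ g ∈ I, f * g ∈ I)
    {α : Fin n →₀ ℕ} (hα : ∃ h, h ∈ I ∧ h ≠ 0 ∧ IsLE h α) :
    ∃ (h : MvPowerSeries (Fin n) k) (θα : ℝ), (1/2 ≤ θα ∧ θα < 1) ∧
      h ∈ I ∧ h ∈ tateAlgebra k n ∧ MvPowerSeries.coeff α h = 1 ∧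
      (∀ d, ‖MvPowerSeries.coeff d h‖ ≤ 1) ∧
      (∀ d, toLex α < toLex d → ‖MvPowerSeries.coeff d h‖ ≤ θα) := by
  classical
  obtain ⟨h₀, hh₀I, hh₀0, hLE⟩ := hα
  have hh₀T : h₀ ∈ tateAlgebra k n := hIsub hh₀I
  set c : k := MvPowerSeries.coeff α h₀ with hc
  have hcn : ‖c‖ = gaussNorm k n h₀ := hLE.1
  have hpos : 0 < gaussNorm k n h₀ := gaussNorm_pos hh₀T hh₀0
  have hc0 : c ≠ 0 := by
    intro hcon
    rw [hcon, norm_zero] at hcn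
    exact absurd hcn.symm (ne_of_gt hpos)
  set h : MvPowerSeries (Fin n) k := MvPowerSeries.monomial 0 c⁻¹ * h₀ with hh
  have hhI : h ∈ I := hImul _ (tate_monomial 0 c⁻¹) h₀ hh₀I
  have hhT : h ∈ tateAlgebra k n := tate_monomial_mul hh₀T 0 c⁻¹
  have hcoeffh : ∀ d, MvPowerSeries.coeff d h = c⁻¹ * MvPowerSeries.coeff d h₀ := by
    intro d; rw [hh, coeff_scale]
  have hlc : MvPowerSeries.coeff α h = 1 := by
    rw [hcoeffh, ← hc, inv_mul_cancel₀ hc0]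
  have hnorm : ∀ d, ‖MvPowerSeries.coeff d h‖ = ‖c‖⁻¹ * ‖MvPowerSeries.coeff d h₀‖ := by
    intro d; rw [hcoeffh, norm_mul, norm_inv]
  have hcpos : 0 < ‖c‖ := norm_pos_iff.mpr hc0
  have hle1 : ∀ d, ‖MvPowerSeries.coeff d h‖ ≤ 1 := by
    intro d
    rw [hnorm]
    calc ‖c‖⁻¹ * ‖MvPowerSeries.coeff d h₀‖ ≤ ‖c‖⁻¹ * ‖c‖ := by
          refine mul_le_mul_of_nonneg_left ?_ (inv_nonneg.mpr hcpos.le)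
          rw [hcn]; exact coeff_le_gaussNorm hh₀T d
      _ = 1 := inv_mul_cancel₀ (ne_of_gt hcpos)
  have hlt1 : ∀ d, toLex α < toLex d → ‖MvPowerSeries.coeff d h‖ < 1 := by
    intro d hd
    have hne : ‖MvPowerSeries.coeff d h₀‖ ≠ gaussNorm k n h₀ := by
      intro hcon
      exact absurd (hLE.2 d hcon) (not_le.mpr hd)
    have hlt : ‖MvPowerSeries.coeff d h₀‖ < ‖c‖ := by
      rw [hcn]
      exact lt_of_le_of_ne (coeff_le_gaussNorm hh₀T d) hne
    rw [hnorm]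
    calc ‖c‖⁻¹ * ‖MvPowerSeries.coeff d h₀‖ < ‖c‖⁻¹ * ‖c‖ :=
        mul_lt_mul_of_pos_left hlt (inv_pos.mpr hcpos)
      _ = 1 := inv_mul_cancel₀ (ne_of_gt hcpos)
  -- second level bound
  set F : Set (Fin n →₀ ℕ) := {d | 1/2 ≤ ‖MvPowerSeries.coeff d h‖ ∧
    ‖MvPowerSeries.coeff d h‖ < 1} with hF
  have hFfin : F.Finite := (hot_finite hhT (by norm_num : (0:ℝ) < 1/2)).subset fun d hd => hd.1
  set TF : Finset ℝ := insert (1/2 : ℝ)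
    (hFfin.toFinset.image (fun d => ‖MvPowerSeries.coeff d h‖)) with hTF
  have hTFne : TF.Nonempty := ⟨1/2, Finset.mem_insert_self _ _⟩
  refine ⟨h, TF.max' hTFne, ⟨Finset.le_max' TF _ (Finset.mem_insert_self _ _), ?_⟩,
    hhI, hhT, hlc, hle1, ?_⟩
  · rw [Finset.max'_lt_iff]
    intro y hy
    rcases Finset.mem_insert.mp hy with rfl | hy
    · norm_num
    · obtain ⟨d, hd, rfl⟩ := Finset.mem_image.mp hy
      exact (Set.Finite.mem_toFinset _ |>.mp hd).2
  · intro d hd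
    rcases le_or_gt (1/2 : ℝ) ‖MvPowerSeries.coeff d h‖ with h1 | h1
    · refine Finset.le_max' TF _ (Finset.mem_insert_of_mem (Finset.mem_image.mpr ⟨d, ?_, rfl⟩))
      rw [Set.Finite.mem_toFinset]
      exact ⟨h1, hlt1 d hd⟩
    · exact h1.le.trans (Finset.le_max' TF _ (Finset.mem_insert_self _ _))

end GClosure

section Limit

variable [IsUltrametricDist k] [CompleteSpace k]

theorem tate_sum (x : ℕ → MvPowerSeries (Fin n) k) (hxT : ∀ m, x m ∈ tateAlgebra k n) (M : ℕ) :
    (∑ m ∈ Finset.range M, x m) ∈ tateAlgebra k n := by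
  induction M with
  | zero => simpa using tate_zero
  | succ M ih => rw [Finset.sum_range_succ]; exact tate_add ih (hxT M)

theorem series_limit (x : ℕ → MvPowerSeries (Fin n) k) (C θ : ℝ)
    (hC : 0 < C) (hθ0 : 0 < θ) (hθ1 : θ < 1)
    (hxT : ∀ m, x m ∈ tateAlgebra k n)
    (hxb : ∀ m, gaussNorm k n (x m) ≤ C * θ ^ m) :
    ∃ y ∈ tateAlgebra k n, ∀ M : ℕ,
      gaussNorm k n (y - ∑ m ∈ Finset.range M, x m) ≤ C * (1 - θ)⁻¹ * θ ^ M := by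
  classical
  have hcb : ∀ m (d : Fin n →₀ ℕ), ‖MvPowerSeries.coeff d (x m)‖ ≤ C * θ ^ m :=
    fun m d => (coeff_le_gaussNorm (hxT m) d).trans (hxb m)
  have hgeo : Summable fun m : ℕ => C * θ ^ m :=
    (summable_geometric_of_lt_one hθ0.le hθ1).mul_left C
  have hsum : ∀ d : Fin n →₀ ℕ, Summable fun m => MvPowerSeries.coeff d (x m) :=
    fun d => Summable.of_norm_bounded hgeo (fun m => hcb m d)
  set y : MvPowerSeries (Fin n) k :=
    (fun d => ∑' m, MvPowerSeries.coeff d (x m) : (Fin n →₀ ℕ) → k) with hy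
  have hycoeff : ∀ d, MvPowerSeries.coeff d y = ∑' m, MvPowerSeries.coeff d (x m) :=
    fun d => by rw [MvPowerSeries.coeff_apply, hy]
  have hone : (0:ℝ) < 1 - θ := by linarith
  -- tail bound
  have htail : ∀ (M : ℕ) (d : Fin n →₀ ℕ),
      ‖MvPowerSeries.coeff d (y - ∑ m ∈ Finset.range M, x m)‖ ≤ C * (1 - θ)⁻¹ * θ ^ M := by
    intro M d
    have hSgeo : Summable fun i : ℕ => C * θ ^ (i + M) := by
      have h := (summable_geometric_of_lt_one hθ0.le hθ1).mul_left (C * θ ^ M)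
      refine h.congr fun i => ?_
      rw [pow_add]; ring
    have hSnorm : Summable fun i : ℕ => ‖MvPowerSeries.coeff d (x (i + M))‖ :=
      Summable.of_nonneg_of_le (fun i => norm_nonneg _) (fun i => hcb (i + M) d) hSgeo
    have heq : MvPowerSeries.coeff d (y - ∑ m ∈ Finset.range M, x m) =
        ∑' i, MvPowerSeries.coeff d (x (i + M)) := by
      rw [map_sub, hycoeff, map_sum]
      rw [← Summable.sum_add_tsum_nat_add M (hsum d)]
      ring
    rw [heq]
    calc ‖∑' i, MvPowerSeries.coeff d (x (i + M))‖
        ≤ ∑' i, ‖MvPowerSeries.coeff d (x (i + M))‖ := norm_tsum_le_tsum_norm hSnorm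
      _ ≤ ∑' i : ℕ, C * θ ^ (i + M) := Summable.tsum_le_tsum (fun i => hcb (i + M) d) hSnorm hSgeo
      _ = (C * θ ^ M) * ∑' i : ℕ, θ ^ i := by
          rw [← tsum_mul_left]
          exact tsum_congr fun i => by rw [pow_add]; ring
      _ = (C * θ ^ M) * (1 - θ)⁻¹ := by rw [tsum_geometric_of_lt_one hθ0.le hθ1]
      _ = C * (1 - θ)⁻¹ * θ ^ M := by ring
  have hgn : ∀ M : ℕ, gaussNorm k n (y - ∑ m ∈ Finset.range M, x m) ≤
      C * (1 - θ)⁻¹ * θ ^ M := fun M => gaussNorm_le (htail M)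
  -- y is in the Tate algebra
  have htend : Tendsto (fun M : ℕ => C * (1 - θ)⁻¹ * θ ^ M) atTop (nhds 0) := by
    have := (tendsto_pow_atTop_nhds_zero_of_lt_one hθ0.le hθ1).const_mul (C * (1 - θ)⁻¹)
    simpa using this
  have hyT : y ∈ tateAlgebra k n := by
    refine tate_of_hot_finite fun ε hε => ?_
    obtain ⟨M, hM⟩ := (htend.eventually (gt_mem_nhds (half_pos hε))).exists
    refine ((hot_finite (tate_sum x hxT M) (half_pos hε)).subset fun d hd => ?_)
    rw [Set.mem_setOf_eq] at hd ⊢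
    have h1 : MvPowerSeries.coeff d y = MvPowerSeries.coeff d (∑ m ∈ Finset.range M, x m) +
        MvPowerSeries.coeff d (y - ∑ m ∈ Finset.range M, x m) := by
      rw [map_sub]; ring
    have h2 : ‖MvPowerSeries.coeff d y‖ ≤
        ‖MvPowerSeries.coeff d (∑ m ∈ Finset.range M, x m)‖ + ε / 2 := by
      rw [h1]
      exact (norm_add_le _ _).trans (by
        have := (htail M d).trans hM.le
        linarith)
    linarith
  exact ⟨y, hyT, hgn⟩

end Limit

end StrictClosed


open StrictClosed in
/-- over a complete nonarchimedean field with dense valuation, for a quotient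
`A = k{t₁,…,tₙ}/I` of the Tate algebra by a closed ideal `I`, equipped with the residue
seminorm, the infimum defining the residue seminorm of any element is attained; in
particular the residue seminorm takes values in the value group `|k|`. -/
theorem stmt2 (k : Type*) [NontriviallyNormedField k] [IsUltrametricDist k] [CompleteSpace k]
    (hdense : ∀ r s : ℝ, 0 < r → r < s → ∃ lam : k, r < ‖lam‖ ∧ ‖lam‖ < s)
    (n : ℕ) (I : Set (MvPowerSeries (Fin n) k))
    (hIsub : I ⊆ tateAlgebra k n)
    (hI0 : (0 : MvPowerSeries (Fin n) k) ∈ I)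
    (hIadd : ∀ g ∈ I, ∀ g' ∈ I, g + g' ∈ I)
    (hImul : ∀ f ∈ tateAlgebra k n, ∀ g ∈ I, f * g ∈ I)
    (hIclosed : ∀ f ∈ tateAlgebra k n,
      (∀ ε : ℝ, 0 < ε → ∃ g ∈ I, gaussNorm k n (f - g) < ε) → f ∈ I)
    (f : MvPowerSeries (Fin n) k) (hf : f ∈ tateAlgebra k n) :
    ∃ g ∈ I, gaussNorm k n (f - g) = sInf {t : ℝ | ∃ g' ∈ I, t = gaussNorm k n (f - g')} ∧
      ∃ lam : k, gaussNorm k n (f - g) = ‖lam‖ := by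
  classical
  -- ideal closed under negation and subtraction
  have hIneg : ∀ g ∈ I, -g ∈ I := by
    intro g hg
    have h1 : MvPowerSeries.monomial (0 : Fin n →₀ ℕ) (-1 : k) * g = -g := by
      apply MvPowerSeries.ext
      intro d
      rw [coeff_scale, map_neg]
      ring
    rw [← h1]
    exact hImul _ (tate_monomial _ _) g hg
  have hIsubtr : ∀ g ∈ I, ∀ g' ∈ I, g - g' ∈ I := by
    intro g hg g' hg'
    rw [sub_eq_add_neg]
    exact hIadd g hg _ (hIneg g' hg')
  set G : Set (Fin n →₀ ℕ) := {γ | ∃ h, h ∈ I ∧ h ≠ 0 ∧ IsLE h γ} with hGdef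
  obtain ⟨A, hAG, hA⟩ := dickson G
  -- reducers
  have hred : ∀ α : Fin n →₀ ℕ, ∃ (h : MvPowerSeries (Fin n) k) (θα : ℝ),
      (1/2 ≤ θα ∧ θα < 1) ∧ (α ∈ A →
        h ∈ I ∧ h ∈ tateAlgebra k n ∧ MvPowerSeries.coeff α h = 1 ∧
        (∀ d, ‖MvPowerSeries.coeff d h‖ ≤ 1) ∧
        (∀ d, toLex α < toLex d → ‖MvPowerSeries.coeff d h‖ ≤ θα)) := by
    intro α
    by_cases hαA : α ∈ A
    · have hαG : ∃ h, h ∈ I ∧ h ≠ 0 ∧ IsLE h α := by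
        have := hAG hαA
        rw [hGdef] at this
        exact this
      obtain ⟨h, θα, hθα, hp⟩ := reducer_exists hIsub hImul hαG
      exact ⟨h, θα, hθα, fun _ => hp⟩
    · exact ⟨0, 1/2, ⟨le_rfl, by norm_num⟩, fun h => absurd h hαA⟩
  choose H Θ hΘrange hHspec using hred
  set Tθ : Finset ℝ := insert (1/2 : ℝ) (A.image Θ) with hTθ
  have hTθne : Tθ.Nonempty := ⟨1/2, Finset.mem_insert_self _ _⟩
  set θ : ℝ := Tθ.max' hTθne with hθdef
  have hθhalf : (1/2 : ℝ) ≤ θ := Finset.le_max' Tθ _ (Finset.mem_insert_self _ _)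
  have hθ0 : 0 < θ := lt_of_lt_of_le (by norm_num) hθhalf
  have hθ1 : θ < 1 := by
    rw [hθdef, Finset.max'_lt_iff]
    intro y hy
    rcases Finset.mem_insert.mp hy with rfl | hy
    · norm_num
    · obtain ⟨α, hα, rfl⟩ := Finset.mem_image.mp hy
      exact (hΘrange α).2
  have hθge : ∀ α ∈ A, Θ α ≤ θ := fun α hα =>
    Finset.le_max' Tθ _ (Finset.mem_insert_of_mem (Finset.mem_image_of_mem Θ hα))
  -- pass input facts
  have hHI : ∀ α ∈ A, H α ∈ I := fun α hα => (hHspec α hα).1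
  have hHT : ∀ α ∈ A, H α ∈ tateAlgebra k n := fun α hα => (hHspec α hα).2.1
  have hHlc : ∀ α ∈ A, MvPowerSeries.coeff α (H α) = 1 := fun α hα => (hHspec α hα).2.2.1
  have hHle : ∀ α ∈ A, ∀ d, ‖MvPowerSeries.coeff d (H α)‖ ≤ 1 :=
    fun α hα => (hHspec α hα).2.2.2.1
  have hHθ : ∀ α ∈ A, ∀ d, toLex α < toLex d → ‖MvPowerSeries.coeff d (H α)‖ ≤ θ :=
    fun α hα d hd => ((hHspec α hα).2.2.2.2 d hd).trans (hθge α hα)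
  -- iteration
  set s₀ : ℝ := gaussNorm k n f + 1 with hs₀def
  have hs₀ : 0 < s₀ := by
    have := gaussNorm_nonneg hf
    rw [hs₀def]; linarith
  set Q : ℕ → MvPowerSeries (Fin n) k → Prop := fun m σ =>
    σ ∈ tateAlgebra k n ∧ (f - σ) ∈ I ∧
      ∀ γ ∈ G, ‖MvPowerSeries.coeff γ σ‖ ≤ s₀ * θ ^ m with hQdef
  have hQ0 : Q 0 f := by
    rw [hQdef]
    refine ⟨hf, by rw [sub_self]; exact hI0, fun γ hγ => ?_⟩
    rw [pow_zero, mul_one, hs₀def]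
    have := coeff_le_gaussNorm hf γ
    linarith
  have hstep : ∀ m σ, Q m σ → ∃ σ', Q (m+1) σ' ∧ (σ - σ') ∈ tateAlgebra k n ∧
      gaussNorm k n (σ - σ') ≤ s₀ * θ ^ m := by
    intro m σ hQm
    rw [hQdef] at hQm
    obtain ⟨hσT, hσI, hσG⟩ := hQm
    obtain ⟨x, hxI, hxT, hxgn, hxconc⟩ := pass hI0 hIadd hImul hA hHI hHT hHlc hHle hθ0 hθ1 hHθ
      (s₀ * θ ^ m) (by positivity) σ hσT hσG
    refine ⟨σ - x, ?_, ?_, ?_⟩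
    · rw [hQdef]
      refine ⟨tate_sub hσT hxT, ?_, fun γ hγ => ?_⟩
      · have h1 : f - (σ - x) = (f - σ) + x := by ring
        rw [h1]
        exact hIadd _ hσI _ hxI
      · calc ‖MvPowerSeries.coeff γ (σ - x)‖ ≤ θ * (s₀ * θ ^ m) := hxconc γ hγ
          _ = s₀ * θ ^ (m+1) := by ring
    · have h1 : σ - (σ - x) = x := by ring
      rw [h1]; exact hxT
    · have h1 : σ - (σ - x) = x := by ring
      rw [h1]; exact hxgn
  choose step hstep1 hstep2 hstep3 using hstep
  -- build the chain
  obtain ⟨seq, hseq0, hseqQ, hseqd⟩ : ∃ seq : ℕ → MvPowerSeries (Fin n) k,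
      seq 0 = f ∧ (∀ m, Q m (seq m)) ∧
      ∀ m, (seq m - seq (m+1)) ∈ tateAlgebra k n ∧
        gaussNorm k n (seq m - seq (m+1)) ≤ s₀ * θ ^ m := by
    let S : ∀ m : ℕ, {σ : MvPowerSeries (Fin n) k // Q m σ} := fun m =>
      Nat.rec ⟨f, hQ0⟩ (fun m p => ⟨step m p.1 p.2, hstep1 m p.1 p.2⟩) m
    refine ⟨fun m => (S m).1, rfl, fun m => (S m).2, fun m => ?_⟩
    show (S m).1 - (S (m+1)).1 ∈ tateAlgebra k n ∧
      gaussNorm k n ((S m).1 - (S (m+1)).1) ≤ s₀ * θ ^ m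
    have he : (S (m+1)).1 = step m (S m).1 (S m).2 := rfl
    rw [he]
    exact ⟨hstep2 m (S m).1 (S m).2, hstep3 m (S m).1 (S m).2⟩
  have hseqQ' : ∀ m, (seq m) ∈ tateAlgebra k n ∧ (f - seq m) ∈ I ∧
      ∀ γ ∈ G, ‖MvPowerSeries.coeff γ (seq m)‖ ≤ s₀ * θ ^ m := by
    intro m
    have := hseqQ m
    rwa [hQdef] at this
  set x : ℕ → MvPowerSeries (Fin n) k := fun m => seq m - seq (m+1) with hxdef
  -- partial sums telescope
  have htele : ∀ M, ∑ m ∈ Finset.range M, x m = f - seq M := by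
    intro M
    induction M with
    | zero => simp [hseq0]
    | succ M ih => rw [Finset.sum_range_succ, ih, hxdef]; ring
  obtain ⟨y, hyT, hyb⟩ := series_limit x s₀ θ hs₀ hθ0 hθ1 (fun m => (hseqd m).1)
    (fun m => (hseqd m).2)
  set ρ : MvPowerSeries (Fin n) k := f - y with hρdef
  have hρT : ρ ∈ tateAlgebra k n := tate_sub hf hyT
  have hρdiff : ∀ M, gaussNorm k n (ρ - seq M) ≤ s₀ * (1 - θ)⁻¹ * θ ^ M := by
    intro M
    have h1 : ρ - seq M = -(y - ∑ m ∈ Finset.range M, x m) := by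
      rw [htele M, hρdef]; ring
    rw [h1, gaussNorm_neg]
    exact hyb M
  have htend : Filter.Tendsto (fun M : ℕ => s₀ * (1 - θ)⁻¹ * θ ^ M)
      Filter.atTop (nhds 0) := by
    have := (tendsto_pow_atTop_nhds_zero_of_lt_one hθ0.le hθ1).const_mul (s₀ * (1 - θ)⁻¹)
    simpa using this
  -- f - ρ ∈ I
  have hfρI : f - ρ ∈ I := by
    refine hIclosed _ (tate_sub hf hρT) fun ε hε => ?_
    obtain ⟨M, hM⟩ := (htend.eventually (gt_mem_nhds hε)).exists
    refine ⟨f - seq M, (hseqQ' M).2.1, ?_⟩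
    have h1 : f - ρ - (f - seq M) = -(ρ - seq M) := by ring
    rw [h1, gaussNorm_neg]
    exact lt_of_le_of_lt (hρdiff M) hM
  -- coefficients of ρ on G vanish
  have hρG : ∀ γ ∈ G, MvPowerSeries.coeff γ ρ = 0 := by
    intro γ hγ
    have hb : ∀ M : ℕ, ‖MvPowerSeries.coeff γ ρ‖ ≤ (s₀ + s₀ * (1 - θ)⁻¹) * θ ^ M := by
      intro M
      have h1 : MvPowerSeries.coeff γ ρ = MvPowerSeries.coeff γ (seq M) +
          MvPowerSeries.coeff γ (ρ - seq M) := by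
        simp only [map_sub, map_add, map_neg]; ring
      have h2 := (hseqQ' M).2.2 γ hγ
      have h3 : ‖MvPowerSeries.coeff γ (ρ - seq M)‖ ≤ s₀ * (1 - θ)⁻¹ * θ ^ M :=
        (coeff_le_gaussNorm (tate_sub hρT (hseqQ' M).1) γ).trans (hρdiff M)
      calc ‖MvPowerSeries.coeff γ ρ‖ ≤ ‖MvPowerSeries.coeff γ (seq M)‖ +
          ‖MvPowerSeries.coeff γ (ρ - seq M)‖ := by rw [h1]; exact norm_add_le _ _
        _ ≤ s₀ * θ ^ M + s₀ * (1 - θ)⁻¹ * θ ^ M := add_le_add h2 h3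
        _ = (s₀ + s₀ * (1 - θ)⁻¹) * θ ^ M := by ring
    have htend2 : Filter.Tendsto (fun M : ℕ => (s₀ + s₀ * (1 - θ)⁻¹) * θ ^ M)
        Filter.atTop (nhds 0) := by
      have := (tendsto_pow_atTop_nhds_zero_of_lt_one hθ0.le hθ1).const_mul
        (s₀ + s₀ * (1 - θ)⁻¹)
      simpa using this
    have h0 : ‖MvPowerSeries.coeff γ ρ‖ ≤ 0 :=
      ge_of_tendsto htend2 (Filter.Eventually.of_forall hb)
    exact norm_le_zero_iff.mp h0
  -- minimality of ρ
  have hmin : ∀ h' ∈ I, gaussNorm k n ρ ≤ gaussNorm k n (ρ - h') := by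
    intro h' hh'
    rcases eq_or_ne h' 0 with rfl | hne
    · rw [sub_zero]
    rcases eq_or_ne ρ 0 with hρ0 | hρne
    · rw [hρ0, gaussNorm_zero, zero_sub, gaussNorm_neg]
      exact gaussNorm_nonneg (hIsub hh')
    by_contra hcon
    push_neg at hcon
    have hh'T : h' ∈ tateAlgebra k n := hIsub hh'
    obtain ⟨γh, hγh⟩ := isLE_exists hh'T hne
    have hγhG : γh ∈ G := by rw [hGdef]; exact ⟨h', hh', hne, hγh⟩
    have hz : MvPowerSeries.coeff γh ρ = 0 := hρG γh hγhG
    have h1 : ‖MvPowerSeries.coeff γh ρ - MvPowerSeries.coeff γh h'‖ < gaussNorm k n ρ := by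
      rw [← map_sub]
      exact lt_of_le_of_lt (coeff_le_gaussNorm (tate_sub hρT hh'T) γh) hcon
    rw [hz, zero_sub, norm_neg] at h1
    have hgh : gaussNorm k n h' = gaussNorm k n ρ := by
      obtain ⟨d₀, hd₀⟩ := gaussNorm_attained hρT hρne
      have hd : ‖MvPowerSeries.coeff d₀ ρ - MvPowerSeries.coeff d₀ h'‖ <
          ‖MvPowerSeries.coeff d₀ ρ‖ := by
        rw [hd₀, ← map_sub]
        exact lt_of_le_of_lt (coeff_le_gaussNorm (tate_sub hρT hh'T) d₀) hcon
      have h2 : ‖MvPowerSeries.coeff d₀ h'‖ = ‖MvPowerSeries.coeff d₀ ρ‖ :=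
        norm_eq_of_sub_lt hd
      refine le_antisymm (gaussNorm_le fun d => ?_) ?_
      · have h3 : MvPowerSeries.coeff d h' = MvPowerSeries.coeff d ρ +
            (MvPowerSeries.coeff d h' - MvPowerSeries.coeff d ρ) := by ring
        have h4 : ‖MvPowerSeries.coeff d h' - MvPowerSeries.coeff d ρ‖ < gaussNorm k n ρ := by
          have h5 : MvPowerSeries.coeff d h' - MvPowerSeries.coeff d ρ =
              -(MvPowerSeries.coeff d (ρ - h')) := by
            simp only [map_sub, map_add, map_neg]; ring
          rw [h5, norm_neg]
          exact lt_of_le_of_lt (coeff_le_gaussNorm (tate_sub hρT hh'T) d) hcon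
        rw [h3]
        exact (norm_add_le_max' _ _).trans (max_le (coeff_le_gaussNorm hρT d) h4.le)
      · rw [← hd₀, ← h2]
        exact coeff_le_gaussNorm hh'T d₀
    have h6 := hγh.1
    rw [hgh] at h6
    rw [h6] at h1
    exact absurd h1 (lt_irrefl _)
  -- conclusion
  set g : MvPowerSeries (Fin n) k := f - ρ with hgdef2
  have hgI : g ∈ I := hfρI
  have hfg : f - g = ρ := by rw [hgdef2]; ring
  have hdist : ∀ g' ∈ I, gaussNorm k n (f - g) ≤ gaussNorm k n (f - g') := by
    intro g' hg'
    have h1 : f - g' = ρ - (g' - g) := by rw [hgdef2]; ring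
    rw [hfg, h1]
    exact hmin (g' - g) (hIsubtr g' hg' g hgI)
  refine ⟨g, hgI, ?_, ?_⟩
  · refine le_antisymm ?_ ?_
    · refine le_csInf ⟨gaussNorm k n (f - g), g, hgI, rfl⟩ ?_
      rintro t ⟨g', hg', rfl⟩
      exact hdist g' hg'
    · refine csInf_le ⟨0, ?_⟩ ⟨g, hgI, rfl⟩
      rintro t ⟨g', hg', rfl⟩
      exact gaussNorm_nonneg (tate_sub hf (hIsub hg'))
  · rcases eq_or_ne ρ 0 with hρ0 | hρne
    · exact ⟨0, by rw [hfg, hρ0, gaussNorm_zero, norm_zero]⟩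
    · obtain ⟨d, hd⟩ := gaussNorm_attained hρT hρne
      exact ⟨MvPowerSeries.coeff d ρ, by rw [hfg, hd]⟩
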